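/- arXiv:2209.12414 — 4 statements merged into one kernel-verified Lean document; each statement's English description precedes it below -/
import Mathlib

section
/- For the chessboard complex Δ_{m,n} with n ≥ m ≥ 1 on vertex set V = {x_{ij} : 1 ≤ i ≤ m, 1 ≤ j ≤ n}, a subset C of V is a minimal vertex cover of Δ_{m,n} if and only if C is obtained from V by deleting all elements in s rows and all elements in m−1−s columns, for some 0 ≤ s ≤ m−1. -/
/-- The facets of the chessboard complex `Δ_{m,n}`: placements of `m`
non-attacking rooks, one in each row. -/
def chessFacets (m n : ℕ) : Set (Finset (Fin m × Fin n)) :=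
  { F | ∃ ℓ : Fin m → Fin n, Function.Injective ℓ ∧
      F = Finset.univ.image (fun i => (i, ℓ i)) }

/-- A vertex cover of the chessboard complex: a set of squares meeting every facet. -/
def IsVertexCover (m n : ℕ) (C : Finset (Fin m × Fin n)) : Prop :=
  ∀ F ∈ chessFacets m n, (F ∩ C).Nonempty

/-- A minimal vertex cover: a vertex cover no proper subset of which is a vertex cover. -/
def IsMinimalVertexCover (m n : ℕ) (C : Finset (Fin m × Fin n)) : Prop :=
  IsVertexCover m n C ∧ ∀ D ⊂ C, ¬ IsVertexCover m n D

/-- There is an injection `Fin m → Fin n` mapping `A` into `B` whenever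
`A.card = B.card` and `m ≤ n`. -/
lemma exists_inj_map (m n : ℕ) (hmn : m ≤ n) (A : Finset (Fin m)) (B : Finset (Fin n))
    (hc : A.card = B.card) :
    ∃ ℓ : Fin m → Fin n, Function.Injective ℓ ∧ ∀ i ∈ A, ℓ i ∈ B := by
  have hBn : B.card ≤ n := by simpa using B.card_le_univ
  have hcc : Aᶜ.card ≤ Bᶜ.card := by
    rw [Finset.card_compl, Finset.card_compl, Fintype.card_fin, Fintype.card_fin]
    omega
  obtain ⟨B₂, hB₂sub, hB₂card⟩ := Finset.exists_subset_card_eq hcc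
  let e : {x // x ∈ A} ≃ {x // x ∈ B} := Finset.equivOfCardEq hc
  let f : {x // x ∈ Aᶜ} ≃ {x // x ∈ B₂} := Finset.equivOfCardEq hB₂card.symm
  refine ⟨fun i => if h : i ∈ A then (e ⟨i, h⟩ : Fin n)
      else (f ⟨i, Finset.mem_compl.mpr h⟩ : Fin n), ?_, ?_⟩
  · intro a b hab
    by_cases ha : a ∈ A <;> by_cases hb : b ∈ A <;> simp [ha, hb] at hab
    · exact hab
    · exfalso
      have h1 : ((e ⟨a, ha⟩ : {x // x ∈ B}) : Fin n) ∈ B := (e ⟨a, ha⟩).2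
      have h2 : ((f ⟨b, Finset.mem_compl.mpr hb⟩ : {x // x ∈ B₂}) : Fin n) ∈ B₂ :=
        (f _).2
      rw [hab] at h1
      exact Finset.mem_compl.mp (hB₂sub h2) h1
    · exfalso
      have h1 : ((e ⟨b, hb⟩ : {x // x ∈ B}) : Fin n) ∈ B := (e ⟨b, hb⟩).2
      have h2 : ((f ⟨a, Finset.mem_compl.mpr ha⟩ : {x // x ∈ B₂}) : Fin n) ∈ B₂ :=
        (f _).2
      rw [← hab] at h1
      exact Finset.mem_compl.mp (hB₂sub h2) h1
    · exact hab
  · intro i hi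
    simp only [dif_pos hi]
    exact (e ⟨i, hi⟩).2

/-- Refined version: additionally send a prescribed `i₀ ∉ A` to a prescribed `j₀ ∉ B`. -/
lemma exists_inj_map' (m n : ℕ) (hmn : m ≤ n) (A : Finset (Fin m)) (B : Finset (Fin n))
    (hc : A.card = B.card) (i₀ : Fin m) (j₀ : Fin n) (hi₀ : i₀ ∉ A) (hj₀ : j₀ ∉ B) :
    ∃ ℓ : Fin m → Fin n, Function.Injective ℓ ∧ ℓ i₀ = j₀ ∧ ∀ i ∈ A, ℓ i ∈ B := by
  obtain ⟨ℓ, hinj, hmap⟩ := exists_inj_map m n hmn (insert i₀ A) (insert j₀ B)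
    (by rw [Finset.card_insert_of_notMem hi₀, Finset.card_insert_of_notMem hj₀, hc])
  refine ⟨(Equiv.swap (ℓ i₀) j₀) ∘ ℓ, (Equiv.injective _).comp hinj, ?_, ?_⟩
  · simp [Equiv.swap_apply_left]
  · intro i hi
    have hne : ℓ i ≠ ℓ i₀ := fun h => hi₀ (hinj h ▸ hi)
    have hmem : ℓ i ∈ insert j₀ B := hmap i (Finset.mem_insert_of_mem hi)
    have hmem₀ : ℓ i₀ ∈ insert j₀ B := hmap i₀ (Finset.mem_insert_self _ _)
    by_cases h : ℓ i = j₀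
    · have : ℓ i₀ ≠ j₀ := fun h' => hne (h.trans h'.symm)
      simp only [Function.comp_apply, h, Equiv.swap_apply_right]
      rcases Finset.mem_insert.mp hmem₀ with h' | h'
      · exact absurd h' this
      · exact h'
    · simp only [Function.comp_apply, Equiv.swap_apply_of_ne_of_ne hne h]
      rcases Finset.mem_insert.mp hmem with h' | h'
      · exact absurd h' h
      · exact h'

/-- Characterization of vertex covers via Hall's theorem: `C` is a vertex cover
iff it contains a full grid on rows `S` and the columns outside `T`, with `T`
smaller than `S`. -/
lemma cover_iff (m n : ℕ) (C : Finset (Fin m × Fin n)) :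
    IsVertexCover m n C ↔ ∃ (S : Finset (Fin m)) (T : Finset (Fin n)),
      T.card < S.card ∧ ∀ i ∈ S, ∀ j ∉ T, (i, j) ∈ C := by
  constructor
  · intro hcov
    set t : Fin m → Finset (Fin n) := fun i => Finset.univ.filter (fun j => (i, j) ∉ C) with ht
    have hno : ¬ ∃ f : Fin m → Fin n, Function.Injective f ∧ ∀ x, f x ∈ t x := by
      rintro ⟨f, hf, hft⟩
      obtain ⟨p, hp⟩ := hcov (Finset.univ.image (fun i => (i, f i))) ⟨f, hf, rfl⟩
      rw [Finset.mem_inter] at hp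
      obtain ⟨i, _, rfl⟩ := Finset.mem_image.mp hp.1
      have := hft i
      rw [ht] at this
      simp only [Finset.mem_filter] at this
      exact this.2 hp.2
    have := (Finset.all_card_le_biUnion_card_iff_exists_injective t).not.mpr hno
    push_neg at this
    obtain ⟨S, hS⟩ := this
    refine ⟨S, S.biUnion t, hS, fun i hi j hj => ?_⟩
    by_contra hC
    exact hj (Finset.mem_biUnion.mpr ⟨i, hi, by simp [ht, hC]⟩)
  · rintro ⟨S, T, hcard, hST⟩ F ⟨ℓ, hℓ, rfl⟩
    have : ∃ i ∈ S, ℓ i ∉ T := by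
      by_contra h
      push_neg at h
      have hsub : S.image ℓ ⊆ T := by
        intro j hj
        obtain ⟨i, hi, rfl⟩ := Finset.mem_image.mp hj
        exact h i hi
      have := Finset.card_le_card hsub
      rw [Finset.card_image_of_injective _ hℓ] at this
      omega
    obtain ⟨i, hi, hiT⟩ := this
    exact ⟨(i, ℓ i), Finset.mem_inter.mpr ⟨Finset.mem_image.mpr ⟨i, Finset.mem_univ _, rfl⟩,
      hST i hi (ℓ i) hiT⟩⟩

/-- A subset `C` of the vertices of `Δ_{m,n}` (`n ≥ m ≥ 1`) is a minimal vertex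
cover iff `C` is obtained from the full vertex set by deleting all squares in
`s` rows and in `m - 1 - s` columns, for some `0 ≤ s ≤ m - 1`. -/
theorem chessboard_minimal_vertex_cover (m n : ℕ) (hm : 1 ≤ m) (hmn : m ≤ n)
    (C : Finset (Fin m × Fin n)) :
    IsMinimalVertexCover m n C ↔
      ∃ s ≤ m - 1, ∃ (R : Finset (Fin m)) (Co : Finset (Fin n)),
        R.card = s ∧ Co.card = m - 1 - s ∧
        C = Finset.univ.filter (fun p : Fin m × Fin n => p.1 ∉ R ∧ p.2 ∉ Co) := by
  constructor
  · rintro ⟨hcov, hmin⟩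
    obtain ⟨S, T, hTS, hgrid⟩ := (cover_iff m n C).mp hcov
    have hS1 : 1 ≤ S.card := lt_of_le_of_lt (Nat.zero_le _) hTS
    have hSm : S.card ≤ m := by simpa using S.card_le_univ
    obtain ⟨T', hTT', hT'card⟩ : ∃ T', T ⊆ T' ∧ T'.card = S.card - 1 :=
      Finset.exists_superset_card_eq (by omega) (by rw [Fintype.card_fin]; omega)
    set G : Finset (Fin m × Fin n) :=
      Finset.univ.filter (fun p => p.1 ∈ S ∧ p.2 ∉ T') with hG
    have hGC : G ⊆ C := by
      intro p hp
      rw [hG, Finset.mem_filter] at hp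
      exact hgrid p.1 hp.2.1 p.2 (fun h => hp.2.2 (hTT' h))
    have hGcov : IsVertexCover m n G := by
      refine (cover_iff m n G).mpr ⟨S, T', by omega, fun i hi j hj => ?_⟩
      rw [hG, Finset.mem_filter]
      exact ⟨Finset.mem_univ _, hi, hj⟩
    have hGeq : G = C := by
      by_contra hne
      exact hmin G (Finset.ssubset_iff_subset_ne.mpr ⟨hGC, hne⟩) hGcov
    refine ⟨m - S.card, by omega, Sᶜ, T', ?_, ?_, ?_⟩
    · rw [Finset.card_compl, Fintype.card_fin]
    · omega
    · rw [← hGeq, hG]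
      ext p
      simp [Finset.mem_compl]
  · rintro ⟨s, hs, R, Co, hR, hCo, rfl⟩
    have hRle : R.card ≤ m := by simpa using R.card_le_univ
    have hRc : Rᶜ.card = m - s := by rw [Finset.card_compl, Fintype.card_fin, hR]
    constructor
    · refine (cover_iff m n _).mpr ⟨Rᶜ, Co, by omega, fun i hi j hj => ?_⟩
      rw [Finset.mem_filter]
      exact ⟨Finset.mem_univ _, Finset.mem_compl.mp hi, hj⟩
    · intro D hD hDcov
      obtain ⟨p₀, hp₀C, hp₀D⟩ := Finset.exists_of_ssubset hD
      rw [Finset.mem_filter] at hp₀C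
      obtain ⟨-, h1, h2⟩ := hp₀C
      have hp₀S : p₀.1 ∈ Rᶜ := Finset.mem_compl.mpr h1
      obtain ⟨ℓ, hinj, hℓ₀, hℓ⟩ := exists_inj_map' m n hmn (Rᶜ.erase p₀.1) Co
        (by rw [Finset.card_erase_of_mem hp₀S, hRc, hCo]; omega)
        p₀.1 p₀.2 (Finset.notMem_erase _ _) h2
      obtain ⟨q, hq⟩ := hDcov (Finset.univ.image (fun i => (i, ℓ i))) ⟨ℓ, hinj, rfl⟩
      rw [Finset.mem_inter] at hq
      obtain ⟨i, -, rfl⟩ := Finset.mem_image.mp hq.1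
      have hqC := hD.subset hq.2
      rw [Finset.mem_filter] at hqC
      by_cases hii : i = p₀.1
      · subst hii
        have : (p₀.1, ℓ p₀.1) = p₀ := by simp [hℓ₀]
        exact hp₀D (this ▸ hq.2)
      · have : ℓ i ∈ Co := hℓ i (Finset.mem_erase.mpr ⟨hii, Finset.mem_compl.mpr hqC.2.1⟩)
        exact hqC.2.2 this
end

section
/- For the chessboard complex Δ_{m,n} with n ≥ m ≥ 1, a prime ideal P of S = k[x_{ij} : i ∈ [m], j ∈ [n]] is a minimal prime of the facet ideal F(Δ_{m,n}) if and only if P is generated by the set of variables obtained from {x_{ij}} by deleting all variables in s rows and all variables in m−1−s columns, for some 0 ≤ s ≤ m−1. -/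
open MvPolynomial

/-- The facet ideal of the chessboard complex `Δ_{m,n}`. -/
noncomputable def chessIdeal (k : Type) [Field k] (m n : ℕ) :
    Ideal (MvPolynomial (Fin m × Fin n) k) :=
  Ideal.span { f | ∃ ℓ : Fin m → Fin n, Function.Injective ℓ ∧
    f = ∏ i : Fin m, X (i, ℓ i) }


section VarSpan

variable {k : Type} [Field k] {σ : Type*}

open Classical in
/-- The algebra map sending variables in `C` to `0` and fixing the others. -/
noncomputable def chessKill (k : Type) [Field k] (C : Set σ) :
    MvPolynomial σ k →ₐ[k] MvPolynomial σ k :=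
  aeval fun v => if v ∈ C then 0 else X v

lemma chessKill_X_mem {C : Set σ} {v : σ} (hv : v ∈ C) :
    chessKill k C (X v) = 0 := by
  classical
  simp [chessKill, aeval_X, hv]

lemma chessKill_X_not_mem {C : Set σ} {v : σ} (hv : v ∉ C) :
    chessKill k C (X v) = X v := by
  classical
  simp [chessKill, aeval_X, hv]

lemma sub_chessKill_mem (C : Set σ) (p : MvPolynomial σ k) :
    p - chessKill k C p ∈ Ideal.span (X '' C) := by
  induction p using MvPolynomial.induction_on with
  | C a => simp [chessKill]
  | add p q hp hq =>
      have := Ideal.add_mem _ hp hq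
      simpa [map_add, add_sub_add_comm] using this
  | mul_X p v hp =>
      by_cases hv : v ∈ C
      · have hX : (X v : MvPolynomial σ k) ∈ Ideal.span (X '' C) := Ideal.subset_span ⟨v, hv, rfl⟩
        have h0 : chessKill k C (p * X v) = 0 := by
          rw [map_mul, chessKill_X_mem hv, mul_zero]
        rw [h0, sub_zero]
        exact Ideal.mul_mem_left _ _ hX
      · have h1 : chessKill k C (p * X v) = chessKill k C p * X v := by
          rw [map_mul, chessKill_X_not_mem hv]
        rw [h1, ← sub_mul]
        exact Ideal.mul_mem_right _ _ hp

lemma span_X_le_ker (C : Set σ) :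
    Ideal.span (X '' C) ≤ RingHom.ker (chessKill k C).toRingHom := by
  rw [Ideal.span_le]
  rintro f ⟨v, hv, rfl⟩
  simpa [RingHom.mem_ker] using chessKill_X_mem (k := k) hv

lemma span_X_eq_ker (C : Set σ) :
    Ideal.span (X '' C) = RingHom.ker (chessKill k C).toRingHom := by
  refine le_antisymm (span_X_le_ker C) fun p hp => ?_
  have h0 : chessKill k C p = 0 := hp
  have := sub_chessKill_mem C p
  rwa [h0, sub_zero] at this

lemma span_X_isPrime (C : Set σ) :
    (Ideal.span (X '' C) : Ideal (MvPolynomial σ k)).IsPrime := by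
  rw [span_X_eq_ker]
  exact RingHom.ker_isPrime _

lemma X_mem_span_X_iff (C : Set σ) (v : σ) :
    X v ∈ (Ideal.span (X '' C) : Ideal (MvPolynomial σ k)) ↔ v ∈ C := by
  constructor
  · intro h
    by_contra hv
    have := span_X_le_ker (k := k) C h
    rw [RingHom.mem_ker] at this
    rw [AlgHom.toRingHom_eq_coe, RingHom.coe_coe, chessKill_X_not_mem hv] at this
    exact X_ne_zero v this
  · intro hv
    exact Ideal.subset_span ⟨v, hv, rfl⟩

end VarSpan

section Cover

variable {k : Type} [Field k] {m n : ℕ}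

/-- `C` covers every "chessboard" monomial support. -/
def ChessCover (m n : ℕ) (C : Set (Fin m × Fin n)) : Prop :=
  ∀ ℓ : Fin m → Fin n, Function.Injective ℓ → ∃ i, (i, ℓ i) ∈ C

lemma chessIdeal_le_span (C : Set (Fin m × Fin n)) (hC : ChessCover m n C) :
    chessIdeal k m n ≤ Ideal.span (X '' C) := by
  rw [chessIdeal, Ideal.span_le]
  rintro f ⟨ℓ, hℓ, rfl⟩
  obtain ⟨i0, hi0⟩ := hC ℓ hℓ
  have hX : (X (i0, ℓ i0) : MvPolynomial (Fin m × Fin n) k) ∈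
      Ideal.span (X '' C) := Ideal.subset_span ⟨(i0, ℓ i0), hi0, rfl⟩
  have : (∏ i : Fin m, (X (i, ℓ i) : MvPolynomial (Fin m × Fin n) k)) =
      X (i0, ℓ i0) * ∏ i ∈ Finset.univ.erase i0, X (i, ℓ i) :=
    (Finset.mul_prod_erase Finset.univ _ (Finset.mem_univ i0)).symm
  rw [this]
  exact Ideal.mul_mem_right _ _ hX

lemma cover_of_le {P : Ideal (MvPolynomial (Fin m × Fin n) k)} (hP : P.IsPrime)
    (hle : chessIdeal k m n ≤ P) : ChessCover m n {v | X v ∈ P} := by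
  intro ℓ hℓ
  have hmem : (∏ i : Fin m, (X (i, ℓ i) : MvPolynomial (Fin m × Fin n) k)) ∈ P :=
    hle (Ideal.subset_span ⟨ℓ, hℓ, rfl⟩)
  have := (Ideal.IsPrime.prod_mem_iff (hp := hP)).mp hmem
  obtain ⟨i, -, hi⟩ := this
  exact ⟨i, hi⟩

/-- A combinatorial rectangle with `|A| + |B| ≥ n + 1` is a cover. -/
lemma rect_cover (A : Finset (Fin m)) (B : Finset (Fin n))
    (hcard : n + 1 ≤ A.card + B.card) :
    ChessCover m n {v | v.1 ∈ A ∧ v.2 ∈ B} := by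
  classical
  intro ℓ hℓ
  by_contra h
  push_neg at h
  have himg : A.image ℓ ⊆ Bᶜ := by
    intro j hj
    obtain ⟨i, hi, rfl⟩ := Finset.mem_image.mp hj
    have := h i
    simp only [Set.mem_setOf_eq, not_and] at this
    exact Finset.mem_compl.mpr (this hi)
  have h1 : A.card = (A.image ℓ).card := (Finset.card_image_of_injective A hℓ).symm
  have h2 : (A.image ℓ).card ≤ Bᶜ.card := Finset.card_le_card himg
  have h3 : Bᶜ.card = n - B.card := by
    rw [Finset.card_compl, Fintype.card_fin]
  have hB : B.card ≤ n := by
    simpa using Finset.card_le_card (Finset.subset_univ B)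
  omega

/-- From Hall's theorem: every cover contains a big combinatorial rectangle. -/
lemma cover_contains_rect (hm : 1 ≤ m) (hmn : m ≤ n)
    (C : Set (Fin m × Fin n)) (hC : ChessCover m n C) :
    ∃ (A : Finset (Fin m)) (B : Finset (Fin n)),
      A.Nonempty ∧ n + 1 ≤ A.card + B.card ∧
      ∀ i ∈ A, ∀ j ∈ B, (i, j) ∈ C := by
  classical
  set t : Fin m → Finset (Fin n) := fun i => Finset.univ.filter fun j => (i, j) ∉ C with ht
  have hhall : ¬ ∀ s : Finset (Fin m), s.card ≤ (s.biUnion t).card := by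
    intro h
    obtain ⟨ℓ, hℓ, hmem⟩ := (Finset.all_card_le_biUnion_card_iff_exists_injective t).mp h
    obtain ⟨i, hi⟩ := hC ℓ hℓ
    have := hmem i
    rw [ht] at this
    simp only [Finset.mem_filter] at this
    exact this.2 hi
  push_neg at hhall
  obtain ⟨S, hS⟩ := hhall
  refine ⟨S, (S.biUnion t)ᶜ, ?_, ?_, ?_⟩
  · have : 0 < S.card := by omega
    exact Finset.card_pos.mp this
  · have h1 : (S.biUnion t)ᶜ.card = n - (S.biUnion t).card := by
      rw [Finset.card_compl, Fintype.card_fin]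
    have h2 : (S.biUnion t).card ≤ n := by
      simpa using Finset.card_le_card (Finset.subset_univ (S.biUnion t))
    have h3 : S.card ≤ m := by
      simpa using Finset.card_le_card (Finset.subset_univ S)
    omega
  · intro i hi j hj
    rw [Finset.mem_compl] at hj
    by_contra hij
    exact hj (Finset.mem_biUnion.mpr ⟨i, hi, by simp [ht, hij]⟩)

lemma rect_set_eq (R : Finset (Fin m)) (Co : Finset (Fin n)) :
    { f : MvPolynomial (Fin m × Fin n) k | ∃ i j, i ∉ R ∧ j ∉ Co ∧ f = X (i, j) } =
      X '' {v : Fin m × Fin n | v.1 ∈ Rᶜ ∧ v.2 ∈ Coᶜ} := by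
  ext f
  constructor
  · rintro ⟨i, j, hi, hj, rfl⟩
    exact ⟨(i, j), ⟨Finset.mem_compl.mpr hi, Finset.mem_compl.mpr hj⟩, rfl⟩
  · rintro ⟨⟨i, j⟩, ⟨hi, hj⟩, rfl⟩
    exact ⟨i, j, Finset.mem_compl.mp hi, Finset.mem_compl.mp hj, rfl⟩

lemma rect_set_eq' (A : Finset (Fin m)) (B : Finset (Fin n)) :
    { f : MvPolynomial (Fin m × Fin n) k | ∃ i j, i ∉ Aᶜ ∧ j ∉ Bᶜ ∧ f = X (i, j) } =
      X '' {v : Fin m × Fin n | v.1 ∈ A ∧ v.2 ∈ B} := by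
  rw [rect_set_eq]
  simp

end Cover

/-- A prime ideal `P` of `S = k[x_{ij}]` is a minimal prime of the facet ideal
of the chessboard complex `Δ_{m,n}` (`n ≥ m ≥ 1`) iff `P` is generated by the
variables remaining after deleting all variables in `s` rows and in `m - 1 - s`
columns, for some `0 ≤ s ≤ m - 1`. -/
theorem chessboard_minimal_primes (k : Type) [Field k] (m n : ℕ)
    (hm : 1 ≤ m) (hmn : m ≤ n)
    (P : Ideal (MvPolynomial (Fin m × Fin n) k)) (hP : P.IsPrime) :
    P ∈ (chessIdeal k m n).minimalPrimes ↔
      ∃ s ≤ m - 1, ∃ (R : Finset (Fin m)) (Co : Finset (Fin n)),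
        R.card = s ∧ Co.card = m - 1 - s ∧
        P = Ideal.span { f | ∃ i j, i ∉ R ∧ j ∉ Co ∧ f = X (i, j) } := by
  classical
  constructor
  · -- forward direction
    intro hmin
    have hIP : chessIdeal k m n ≤ P := hmin.1.2
    have hcov : ChessCover m n {v | X v ∈ P} := cover_of_le hP hIP
    obtain ⟨A, B, hAne, hcard, hAB⟩ := cover_contains_rect hm hmn _ hcov
    have hAm : A.card ≤ m := by
      simpa using Finset.card_le_card (Finset.subset_univ A)
    have hA1 : 1 ≤ A.card := Finset.card_pos.mpr hAne
    -- shrink B to B1 with |A| + |B1| = n + 1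
    obtain ⟨B1, hB1sub, hB1card⟩ := Finset.exists_subset_card_eq (s := B) (n := n + 1 - A.card) (by omega)
    set Q : Ideal (MvPolynomial (Fin m × Fin n) k) :=
      Ideal.span (X '' {v : Fin m × Fin n | v.1 ∈ A ∧ v.2 ∈ B1}) with hQ
    have hQprime : Q.IsPrime := span_X_isPrime _
    have hIQ : chessIdeal k m n ≤ Q := by
      apply chessIdeal_le_span
      apply rect_cover
      omega
    have hQP : Q ≤ P := by
      rw [hQ, Ideal.span_le]
      rintro f ⟨⟨i, j⟩, ⟨hi, hj⟩, rfl⟩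
      exact hAB i hi j (hB1sub hj)
    have hPQ : P ≤ Q := hmin.2 ⟨hQprime, hIQ⟩ hQP
    have hPeq : P = Q := le_antisymm hPQ hQP
    refine ⟨m - A.card, by omega, Aᶜ, B1ᶜ, ?_, ?_, ?_⟩
    · rw [Finset.card_compl, Fintype.card_fin]
    · rw [Finset.card_compl, Fintype.card_fin]
      omega
    · rw [rect_set_eq' A B1, hPeq, hQ]
  · -- backward direction
    rintro ⟨s, hs, R, Co, hR, hCo, hPeq⟩
    have hsm : s ≤ m - 1 := hs
    have hRm : R.card ≤ m := by
      simpa using Finset.card_le_card (Finset.subset_univ R)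
    have hCon : Co.card ≤ n := by
      simpa using Finset.card_le_card (Finset.subset_univ Co)
    set A : Finset (Fin m) := Rᶜ with hA
    set B : Finset (Fin n) := Coᶜ with hB
    have hAcard : A.card = m - s := by
      rw [hA, Finset.card_compl, Fintype.card_fin, hR]
    have hBcard : B.card = n - (m - 1 - s) := by
      rw [hB, Finset.card_compl, Fintype.card_fin, hCo]
    have hsum : A.card + B.card = n + 1 := by omega
    have hPspan : P = Ideal.span (X '' {v : Fin m × Fin n | v.1 ∈ A ∧ v.2 ∈ B}) := by
      rw [hPeq, rect_set_eq]
    constructor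
    · refine ⟨hP, ?_⟩
      rw [hPspan]
      exact chessIdeal_le_span _ (rect_cover A B (by omega))
    · rintro Q ⟨hQprime, hIQ⟩ hQP
      have hcovQ : ChessCover m n {v | X v ∈ Q} := cover_of_le hQprime hIQ
      obtain ⟨A', B', hA'ne, hcard', hAB'⟩ := cover_contains_rect hm hmn _ hcovQ
      have hsubP : ∀ i ∈ A', ∀ j ∈ B', (i, j) ∈ {v : Fin m × Fin n | v.1 ∈ A ∧ v.2 ∈ B} := by
        intro i hi j hj
        have hXQ : X (i, j) ∈ Q := hAB' i hi j hj
        have hXP : X (i, j) ∈ P := hQP hXQ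
        rw [hPspan] at hXP
        exact (X_mem_span_X_iff _ _).mp hXP
      have hA'm : A'.card ≤ m := by
        simpa using Finset.card_le_card (Finset.subset_univ A')
      have hB'ne : B'.Nonempty := by
        rw [← Finset.card_pos]
        omega
      obtain ⟨j0, hj0⟩ := hB'ne
      obtain ⟨i0, hi0⟩ := hA'ne
      have hA'A : A' ⊆ A := fun i hi => (hsubP i hi j0 hj0).1
      have hB'B : B' ⊆ B := fun j hj => (hsubP i0 hi0 j hj).2
      have hA'card : A.card ≤ A'.card := by
        have h1 : A'.card ≤ A.card := Finset.card_le_card hA'A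
        have h2 : B'.card ≤ B.card := Finset.card_le_card hB'B
        omega
      have hB'card : B.card ≤ B'.card := by
        have h1 : A'.card ≤ A.card := Finset.card_le_card hA'A
        omega
      have hA'eq : A' = A := Finset.eq_of_subset_of_card_le hA'A hA'card
      have hB'eq : B' = B := Finset.eq_of_subset_of_card_le hB'B hB'card
      rw [hPspan, Ideal.span_le]
      rintro f ⟨⟨i, j⟩, ⟨hi, hj⟩, rfl⟩
      exact hAB' i (hA'eq ▸ hi) j (hB'eq ▸ hj)
end

section
/- For integers 0 ≤ s ≤ m−1 and n ≥ m ≥ 1, the function f(s) = (n−(m−1−s))(m−s) satisfies: max over 0 ≤ s ≤ m−1 of f(s) equals (n−m+1)m if n ≥ 2m−1, and equals ⌊(n+1)²/4⌋ if n < 2m−1. -/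
lemma prod_le_sq_div_four (k x : ℕ) (hx : x ≤ k) : x * (k - x) ≤ k ^ 2 / 4 := by
  rw [Nat.le_div_iff_mul_le (by norm_num)]
  zify [hx]
  nlinarith [sq_nonneg ((k : ℤ) - 2 * x)]

lemma half_mul_sq (k : ℕ) : k / 2 * (k - k / 2) = k ^ 2 / 4 := by
  obtain ⟨t, rfl | rfl⟩ := Nat.even_or_odd' k
  · have h1 : 2 * t / 2 = t := by omega
    have h2 : 2 * t - t = t := by omega
    rw [h1, h2]
    have h3 : (2 * t) ^ 2 = 4 * (t * t) := by ring
    rw [h3, Nat.mul_div_cancel_left _ (by norm_num)]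
  · have h1 : (2 * t + 1) / 2 = t := by omega
    have h2 : 2 * t + 1 - t = t + 1 := by omega
    rw [h1, h2]
    have h3 : (2 * t + 1) ^ 2 = 4 * (t * (t + 1)) + 1 := by ring
    rw [h3, Nat.mul_add_div (by norm_num)]
    simp

/-- For `n ≥ m ≥ 1`, the maximum over `0 ≤ s ≤ m - 1` of
`f(s) = (n - (m - 1 - s)) (m - s)` equals `(n - m + 1) m` when `n ≥ 2m - 1`,
and equals `⌊(n+1)²/4⌋` when `n < 2m - 1`. -/
theorem chessboard_height_function_max (m n : ℕ) (hm : 1 ≤ m) (hmn : m ≤ n) :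
    (2 * m - 1 ≤ n →
      (Finset.range m).sup (fun s => (n - (m - 1 - s)) * (m - s)) = (n - m + 1) * m) ∧
    (n < 2 * m - 1 →
      (Finset.range m).sup (fun s => (n - (m - 1 - s)) * (m - s)) = (n + 1) ^ 2 / 4) := by
  constructor
  · intro h
    apply le_antisymm
    · apply Finset.sup_le
      intro s hs
      rw [Finset.mem_range] at hs
      have e1 : n - (m - 1 - s) = n - m + 1 + s := by omega
      rw [e1]
      set a := n - m + 1 with ha
      have hma : m ≤ a := by omega
      have hsm : m - s + s = m := by omega
      calc (a + s) * (m - s) = a * (m - s) + s * (m - s) := by ring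
        _ ≤ a * (m - s) + a * s := by
            apply Nat.add_le_add_left
            calc s * (m - s) ≤ s * m := Nat.mul_le_mul_left _ (by omega)
              _ ≤ s * a := Nat.mul_le_mul_left _ hma
              _ = a * s := by ring
        _ = a * (m - s + s) := by ring
        _ = a * m := by rw [hsm]
    · have h0 : (0 : ℕ) ∈ Finset.range m := Finset.mem_range.mpr hm
      have := Finset.le_sup (f := fun s => (n - (m - 1 - s)) * (m - s)) h0
      have e : n - (m - 1 - 0) = n - m + 1 := by omega
      rw [e] at this
      simpa using this
  · intro h
    apply le_antisymm
    · apply Finset.sup_le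
      intro s hs
      rw [Finset.mem_range] at hs
      have e1 : n - (m - 1 - s) = n - m + 1 + s := by omega
      have e2 : m - s = (n + 1) - (n - m + 1 + s) := by omega
      rw [e1, e2]
      exact prod_le_sq_div_four (n + 1) _ (by omega)
    · set s₀ := (n + 1) / 2 - (n - m + 1) with hs₀
      have hmem : s₀ ∈ Finset.range m := Finset.mem_range.mpr (by omega)
      have := Finset.le_sup (f := fun s => (n - (m - 1 - s)) * (m - s)) hmem
      have e1 : n - (m - 1 - s₀) = (n + 1) / 2 := by omega
      have e2 : m - s₀ = (n + 1) - (n + 1) / 2 := by omega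
      rw [e1, e2, half_mul_sq] at this
      exact this
end

section
/- For every t ≥ 1, F(Δ_{2,2})^t = (x_{11},x_{12})^t ∩ (x_{21},x_{22})^t ∩ (x_{11},x_{21})^t ∩ (x_{12},x_{22})^t in S = k[x_{11},x_{12},x_{21},x_{22}]. -/
open MvPolynomial

section Aux

variable {σ : Type*} [DecidableEq σ] {k : Type*} [CommRing k]

/-- weighted degree of an exponent vector -/
def wtAux (w : σ → ℕ) (d : σ →₀ ℕ) : ℕ := d.sum fun i e => e * w i

lemma wtAux_add (w : σ → ℕ) (d₁ d₂ : σ →₀ ℕ) :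
    wtAux w (d₁ + d₂) = wtAux w d₁ + wtAux w d₂ :=
  Finsupp.sum_add_index' (fun _ => by simp) (fun _ _ _ => by ring)

lemma wtAux_single (w : σ → ℕ) (u : σ) (n : ℕ) :
    wtAux w (Finsupp.single u n) = n * w u :=
  Finsupp.sum_single_index (by simp)

/-- the ideal of polynomials all of whose monomials have weighted degree ≥ t -/
def wIdeal (w : σ → ℕ) (t : ℕ) : Ideal (MvPolynomial σ k) where
  carrier := {f | ∀ d ∈ f.support, t ≤ wtAux w d}
  zero_mem' := by simp
  add_mem' := by
    intro a b ha hb d hd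
    rcases Finset.mem_union.1 (MvPolynomial.support_add hd) with h | h
    · exact ha d h
    · exact hb d h
  smul_mem' := by
    intro c x hx d hd
    have h := MvPolynomial.support_mul c x hd
    rw [Finset.mem_add] at h
    obtain ⟨a, ha, b, hb, rfl⟩ := h
    rw [wtAux_add]
    exact le_add_of_le_right (hx b hb)

lemma mem_wIdeal {w : σ → ℕ} {t : ℕ} {f : MvPolynomial σ k} :
    f ∈ wIdeal w t ↔ ∀ d ∈ f.support, t ≤ wtAux w d := Iff.rfl

lemma mul_mem_wIdeal {w : σ → ℕ} {s r : ℕ} {a b : MvPolynomial σ k}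
    (ha : a ∈ wIdeal w s) (hb : b ∈ wIdeal w r) : a * b ∈ wIdeal w (s + r) := by
  rw [mem_wIdeal]
  intro d hd
  have h := MvPolynomial.support_mul a b hd
  rw [Finset.mem_add] at h
  obtain ⟨x, hx, y, hy, rfl⟩ := h
  rw [wtAux_add]
  exact add_le_add (mem_wIdeal.1 ha x hx) (mem_wIdeal.1 hb y hy)

lemma span_pow_le_wIdeal {w : σ → ℕ} {G : Set (MvPolynomial σ k)}
    (hG : ∀ g ∈ G, g ∈ wIdeal w 1) (t : ℕ) :
    Ideal.span G ^ t ≤ wIdeal w t := by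
  induction t with
  | zero =>
    intro f _
    rw [mem_wIdeal]
    intro d _
    exact Nat.zero_le _
  | succ n ih =>
    rw [pow_succ]
    refine Ideal.mul_le.2 fun a ha b hb => ?_
    exact mul_mem_wIdeal (ih ha) (Ideal.span_le.2 hG hb)

lemma mem_pow_of_support {I : Ideal (MvPolynomial σ k)} {t : ℕ} {f : MvPolynomial σ k}
    (h : ∀ d ∈ f.support, ∃ e ≤ d, (monomial e (1 : k)) ∈ I ^ t) : f ∈ I ^ t := by
  rw [f.as_sum]
  refine Ideal.sum_mem _ fun d hd => ?_
  obtain ⟨e, he, hm⟩ := h d hd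
  have heq : (monomial d (coeff d f) : MvPolynomial σ k)
      = monomial (d - e) (coeff d f) * monomial e 1 := by
    rw [monomial_mul, mul_one, tsub_add_cancel_of_le he]
  rw [heq]
  exact Ideal.mul_mem_left _ _ hm

end Aux

/-- For every `t ≥ 1`, in `S = k[x₁₁,x₁₂,x₂₁,x₂₂]`,
`(x₁₁x₂₂, x₁₂x₂₁)^t = (x₁₁,x₁₂)^t ∩ (x₂₁,x₂₂)^t ∩ (x₁₁,x₂₁)^t ∩ (x₁₂,x₂₂)^t`. -/
theorem chessboard22_power_decomposition (k : Type) [Field k] (t : ℕ) (ht : 1 ≤ t) :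
    (Ideal.span {X (0, 0) * X (1, 1), X (0, 1) * X (1, 0)} :
        Ideal (MvPolynomial (Fin 2 × Fin 2) k)) ^ t =
      (Ideal.span {X (0, 0), X (0, 1)} : Ideal (MvPolynomial (Fin 2 × Fin 2) k)) ^ t ⊓
      (Ideal.span {X (1, 0), X (1, 1)}) ^ t ⊓
      (Ideal.span {X (0, 0), X (1, 0)}) ^ t ⊓
      (Ideal.span {X (0, 1), X (1, 1)}) ^ t := by
  set I : Ideal (MvPolynomial (Fin 2 × Fin 2) k) :=
    Ideal.span {X (0, 0) * X (1, 1), X (0, 1) * X (1, 0)} with hI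
  apply le_antisymm
  · -- easy direction
    refine le_inf (le_inf (le_inf ?_ ?_) ?_) ?_ <;>
    refine Ideal.pow_right_mono (Ideal.span_le.2 ?_) t <;>
    rintro g (rfl | rfl)
    · exact Ideal.mul_mem_right _ _ (Ideal.subset_span (by simp))
    · exact Ideal.mul_mem_right _ _ (Ideal.subset_span (by simp))
    · exact Ideal.mul_mem_left _ _ (Ideal.subset_span (by simp))
    · exact Ideal.mul_mem_left _ _ (Ideal.subset_span (by simp))
    · exact Ideal.mul_mem_right _ _ (Ideal.subset_span (by simp))
    · exact Ideal.mul_mem_left _ _ (Ideal.subset_span (by simp))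
    · exact Ideal.mul_mem_left _ _ (Ideal.subset_span (by simp))
    · exact Ideal.mul_mem_right _ _ (Ideal.subset_span (by simp))
  · intro f hf
    rw [Submodule.mem_inf, Submodule.mem_inf, Submodule.mem_inf] at hf
    obtain ⟨⟨⟨hf1, hf2⟩, hf3⟩, hf4⟩ := hf
    have key : ∀ (w : Fin 2 × Fin 2 → ℕ) (u v : Fin 2 × Fin 2), w u = 1 → w v = 1 →
        f ∈ (Ideal.span {X u, X v} : Ideal (MvPolynomial (Fin 2 × Fin 2) k)) ^ t →
        ∀ d ∈ f.support, t ≤ wtAux w d := by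
      intro w u v hu hv hmem
      refine mem_wIdeal.1 (span_pow_le_wIdeal ?_ t hmem)
      rintro g (rfl | rfl) <;> rw [mem_wIdeal] <;> intro d hd <;>
        rw [support_X, Finset.mem_singleton] at hd <;> subst hd <;>
        simp [wtAux_single, hu, hv]
    have k1 := key (fun p => if p.1 = 0 then 1 else 0) (0,0) (0,1) rfl rfl hf1
    have k2 := key (fun p => if p.1 = 1 then 1 else 0) (1,0) (1,1) rfl rfl hf2
    have k3 := key (fun p => if p.2 = 0 then 1 else 0) (0,0) (1,0) rfl rfl hf3
    have k4 := key (fun p => if p.2 = 1 then 1 else 0) (0,1) (1,1) rfl rfl hf4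
    have wteq : ∀ (w : Fin 2 × Fin 2 → ℕ) (d : (Fin 2 × Fin 2) →₀ ℕ), wtAux w d =
        d (0,0) * w (0,0) + d (0,1) * w (0,1) + d (1,0) * w (1,0) + d (1,1) * w (1,1) := by
      intro w d
      rw [wtAux, Finsupp.sum_fintype _ _ (fun _ => by simp)]
      rw [Fintype.sum_prod_type]
      simp [Fin.sum_univ_two]
      ring
    refine mem_pow_of_support fun d hd => ?_
    have h1 := k1 d hd; have h2 := k2 d hd; have h3 := k3 d hd; have h4 := k4 d hd
    rw [wteq] at h1 h2 h3 h4
    norm_num at h1 h2 h3 h4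
    -- now h1 : t ≤ d 0 + d (0,1) etc (in some normal form)
    set i := min (min (d 0) (d 1)) t with hidef
    set j := t - i with hjdef
    have hij : i + j = t := by omega
    have hiα : i ≤ d 0 := by omega
    have hiδ : i ≤ d 1 := by omega
    have hjβ : j ≤ d (0,1) := by
      have e0 : d 0 = d (0,0) := rfl; have e1 : d 1 = d (1,1) := rfl; omega
    have hjγ : j ≤ d (1,0) := by
      have e0 : d 0 = d (0,0) := rfl; have e1 : d 1 = d (1,1) := rfl; omega
    refine ⟨(Finsupp.single ((0,0) : Fin 2 × Fin 2) i + Finsupp.single ((1,1) : Fin 2 × Fin 2) i)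
        + (Finsupp.single ((0,1) : Fin 2 × Fin 2) j + Finsupp.single ((1,0) : Fin 2 × Fin 2) j), ?_, ?_⟩
    · intro s
      obtain ⟨s1, s2⟩ := s
      fin_cases s1 <;> fin_cases s2 <;>
        simp only [Finsupp.add_apply, Finsupp.single_apply] <;>
        norm_num [Prod.ext_iff] <;> omega
    · have ha : (X (0,0) * X (1,1) : MvPolynomial (Fin 2 × Fin 2) k) ∈ I :=
        Ideal.subset_span (by simp)
      have hb : (X (0,1) * X (1,0) : MvPolynomial (Fin 2 × Fin 2) k) ∈ I :=
        Ideal.subset_span (by simp)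
      have hmem := Ideal.mul_mem_mul (Ideal.pow_mem_pow ha i) (Ideal.pow_mem_pow hb j)
      rw [← pow_add, hij] at hmem
      have heq : ((X (0,0) * X (1,1) : MvPolynomial (Fin 2 × Fin 2) k)) ^ i
          * ((X (0,1) * X (1,0)) ^ j)
          = monomial ((Finsupp.single ((0,0) : Fin 2 × Fin 2) i + Finsupp.single ((1,1) : Fin 2 × Fin 2) i)
            + (Finsupp.single ((0,1) : Fin 2 × Fin 2) j + Finsupp.single ((1,0) : Fin 2 × Fin 2) j)) (1 : k) := by
        simp [mul_pow, X_pow_eq_monomial, monomial_mul]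
      rwa [heq] at hmem
end
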